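/- Every large scale paracompact metric space has Property A. -/

import Mathlib

open Function Metric ENNReal

noncomputable section

/-- `ℓ¹(S)`: real-valued functions on `S` with finite `ℓ¹`-norm, with the `ℓ¹` metric. -/
abbrev ellOne (S : Type u) : Type u := lp (fun _ : S => ℝ) 1

/-- The full simplex `Δ(S) ⊆ ℓ¹(S)`. -/
def fullSimplex (S : Type u) : Set (ellOne S) :=
  {p | (∀ s, 0 ≤ p s) ∧ (support (p : S → ℝ)).Finite ∧ ∑' s, p s = 1}

/-- The `n`-skeleton `Δ(S)^(n)` of the full simplex. -/
def skeleton (S : Type u) (n : ℕ) : Set (ellOne S) :=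
  {p ∈ fullSimplex S | (support (p : S → ℝ)).encard ≤ n + 1}

/-- A simplicial complex on `S`: a subset of `Δ(S)` closed under passing to
points whose support is contained in the support of a member. -/
def IsSimplicialComplex {S : Type u} (K : Set (ellOne S)) : Prop :=
  K ⊆ fullSimplex S ∧
    ∀ p ∈ K, ∀ q ∈ fullSimplex S,
      support (q : S → ℝ) ⊆ support (p : S → ℝ) → q ∈ K

/-- The star of a vertex `v` in `K`. -/
def star {S : Type u} (K : Set (ellOne S)) (v : S) : Set (ellOne S) :=
  {p ∈ K | 0 < p v}

/-- `f` is `(λ, C)`-Lipschitz. -/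
def IsLipschitzLC {X Y : Type*} [MetricSpace X] [MetricSpace Y]
    (l C : ℝ) (f : X → Y) : Prop :=
  ∀ x y, dist (f x) (f y) ≤ l * dist x y + C

/-- A family of sets is uniformly bounded. -/
def UniformlyBounded {X : Type*} [MetricSpace X] {ι : Type*} (U : ι → Set X) : Prop :=
  ∃ M : ℝ, ∀ i, ∀ x ∈ U i, ∀ y ∈ U i, dist x y ≤ M

/-- `U` is a cover of the whole space. -/
def IsCover {X : Type*} {ι : Type*} (U : ι → Set X) : Prop := ∀ x, ∃ i, x ∈ U i

/-- The Lebesgue number `inf_x sup_i dist(x, X∖Uᵢ)` of a family, as a value in `ℝ≥0∞`. -/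
def lebesgue {X : Type*} [MetricSpace X] {ι : Type*} (U : ι → Set X) : ℝ≥0∞ :=
  ⨅ x : X, ⨆ i, EMetric.infEdist x (U i)ᶜ

/-- The multiplicity of `U` is at most `m`. -/
def MultiplicityLE {X : Type*} [MetricSpace X] {ι : Type*} (U : ι → Set X) (m : ℕ) : Prop :=
  ∀ x : X, {i | 0 < Metric.infDist x ((U i)ᶜ)}.encard ≤ m

/-- `f : X → K` is a `δ`-partition of unity. -/
def IsDeltaPartitionOfUnity {X : Type*} [MetricSpace X] {S : Type u}
    (δ : ℝ) (K : Set (ellOne S)) (f : X → ellOne S) : Prop :=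
  (∀ x, f x ∈ K) ∧ IsLipschitzLC δ δ f ∧
    UniformlyBounded (fun v : S => f ⁻¹' star K v) ∧
    ENNReal.ofReal (1 / δ) ≤ lebesgue (fun v : S => f ⁻¹' star K v)

/-- `X` is large scale paracompact. -/
def LSParacompact (X : Type u) [MetricSpace X] : Prop :=
  ∀ (ι : Type u) (U : ι → Set X), IsCover U → UniformlyBounded U →
    ∀ l C : ℝ, 0 < l → 0 < C →
      ∃ (S : Type u) (K : Set (ellOne S)) (f : X → ellOne S),
        IsSimplicialComplex K ∧ (∀ x, f x ∈ K) ∧ IsLipschitzLC l C f ∧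
        UniformlyBounded (fun v : S => f ⁻¹' star K v) ∧
        ∀ i, ∃ v : S, U i ⊆ f ⁻¹' star K v

/-- `X` has asymptotic dimension at most `n`. -/
def AsdimLE (X : Type u) [MetricSpace X] (n : ℕ) : Prop :=
  ∀ R : ℝ, 0 < R → ∃ (ι : Type u) (U : ι → Set X),
    IsCover U ∧ UniformlyBounded U ∧ MultiplicityLE U (n + 1) ∧
    ENNReal.ofReal R ≤ lebesgue U

/-- `X` has Property A. -/
def PropertyA (X : Type u) [MetricSpace X] : Prop :=
  ∀ R ε : ℝ, 0 < R → 0 < ε →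
    ∃ (M : ℝ) (S : Type u) (φ : S → X → ℝ), 0 < M ∧
      (∀ s x, 0 ≤ φ s x ∧ φ s x ≤ 1) ∧
      (∀ x, (support fun s => φ s x).Finite) ∧
      (∀ x, ∑' s, φ s x = 1) ∧
      (∀ x y, dist x y ≤ R → ∑' s, |φ s x - φ s y| < ε) ∧
      (∀ s, ∀ x ∈ support (φ s), ∀ y ∈ support (φ s), dist x y ≤ M)

/-- `f` has `(R, ε)` variation. -/
def HasVariation {X Y : Type*} [MetricSpace X] [MetricSpace Y] (R ε : ℝ) (f : X → Y) : Prop :=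
  ∀ x y, dist x y ≤ R → dist (f x) (f y) < ε

/-- `g` is a coarse embedding. -/
def CoarseEmbedding {X Y : Type*} [MetricSpace X] [MetricSpace Y] (g : X → Y) : Prop :=
  ∃ ρminus ρplus : ℝ → ℝ, Monotone ρminus ∧ Monotone ρplus ∧
    Filter.Tendsto ρminus Filter.atTop Filter.atTop ∧
    ∀ x y, ρminus (dist x y) ≤ dist (g x) (g y) ∧ dist (g x) (g y) ≤ ρplus (dist x y)

/-- `X` has bounded geometry: balls of any fixed radius have uniformly bounded cardinality. -/
def BoundedGeometry (X : Type*) [MetricSpace X] : Prop :=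
  ∀ r : ℝ, 0 < r → ∃ N : ℕ, ∀ x : X, (Metric.ball x r).encard ≤ N

lemma ellOne_dist_eq_tsum {S : Type u} (g h : ellOne S) :
    dist g h = ∑' s, |g s - h s| := by
  rw [dist_eq_norm, lp.norm_eq_tsum_rpow (by norm_num) (g - h)]
  simp [Real.rpow_one, Real.norm_eq_abs, lp.coeFn_sub, Pi.sub_apply]

/-- every large scale paracompact metric space has Property A. -/
theorem propertyA_of_lsParacompact (X : Type u) [MetricSpace X]
    (h : LSParacompact X) : PropertyA X := by
  intro R ε hR hε
  obtain ⟨S, K, f, hK, hfK, hLip, ⟨M', hM'⟩, -⟩ :=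
    h X (fun x => {x}) (fun x => ⟨x, rfl⟩)
      ⟨0, by rintro i x rfl y rfl; simp⟩
      (ε/(2*R)) (ε/4) (by positivity) (by positivity)
  have hmem : ∀ x, f x ∈ fullSimplex S := fun x => hK.1 (hfK x)
  have hnn : ∀ x s, 0 ≤ f x s := fun x s => (hmem x).1 s
  have hfin : ∀ x, (support (fun s => f x s)).Finite := fun x => (hmem x).2.1
  have hsum : ∀ x, Summable (fun s => f x s) := by
    intro x
    exact summable_of_ne_finset_zero (s := (hfin x).toFinset)
      (fun s hs => by simpa using fun h' => hs ((hfin x).mem_toFinset.2 h'))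
  have htsum : ∀ x, ∑' s, f x s = 1 := fun x => (hmem x).2.2
  refine ⟨max M' 1, S, fun s x => f x s,
    lt_of_lt_of_le one_pos (le_max_right _ _), ?_, hfin, htsum, ?_, ?_⟩
  · intro s x
    refine ⟨hnn x s, ?_⟩
    calc f x s ≤ ∑' t, f x t := (hsum x).le_tsum s (fun t _ => hnn x t)
      _ = 1 := htsum x
  · intro x y hxy
    have h1 : dist (f x) (f y) ≤ ε/(2*R) * dist x y + ε/4 := hLip x y
    have h2 : ε/(2*R) * dist x y ≤ ε/(2*R) * R := by
      apply mul_le_mul_of_nonneg_left hxy (by positivity)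
    have h3 : ε/(2*R) * R = ε/2 := by field_simp
    have := ellOne_dist_eq_tsum (f x) (f y)
    rw [this] at h1
    nlinarith
  · intro s x hx y hy
    have hx' : f x ∈ star K s := ⟨hfK x, lt_of_le_of_ne (hnn x s) (Ne.symm hx)⟩
    have hy' : f y ∈ star K s := ⟨hfK y, lt_of_le_of_ne (hnn y s) (Ne.symm hy)⟩
    exact le_trans (hM' s x hx' y hy') (le_max_left _ _)

end
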